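/- Let n ≥ 1 and dim ≥ 2 be integers, and let X = {X_i = (i, i, …, i) ∈ ℝ^dim : i = 1, …, n} be the diagonal dataset of n points. Let H be the hypothesis class on X consisting of the all-zero classifier h₀ together with, for each c ∈ {1, …, n}, the classifier h_c(x) = (c ≤ x₁ ∧ x₂ < c + 1) (each h_c is realized by a height-2 decision tree whose two internal nodes query distinct dimensions). Then each h_c lies in B_H(h₀, 1/n), DIS_X(B_H(h₀, 1/n)) = X, and hence the disagreement coefficient of h₀ satisfies θ_{h₀} ≥ n. -/
import Mathlib


open scoped Classical

noncomputable section

/-- Distance between two hypotheses on the dataset `X`. -/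
def hypDist {α : Type*} (X : Finset α) (h h' : α → Bool) : ℝ :=
  ((X.filter fun x => h x ≠ h' x).card : ℝ) / X.card

/-- Ball of radius `r` around `h` inside the class `H`. -/
def hypBall {α : Type*} (X : Finset α) (H : Set (α → Bool))
    (h : α → Bool) (r : ℝ) : Set (α → Bool) :=
  {h' ∈ H | hypDist X h h' ≤ r}

/-- Disagreement region (as a finite subset of `X`) of a set `V` of hypotheses. -/
def DIS {α : Type*} (X : Finset α) (V : Set (α → Bool)) : Finset α :=
  X.filter fun x => ∃ h₁ ∈ V, ∃ h₂ ∈ V, h₁ x ≠ h₂ x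

/-- The diagonal dataset `X_i = (i, i, …, i)` for `i = 1, …, n`. -/
def diagX (n dim : ℕ) : Finset (Fin dim → ℝ) :=
  (Finset.Icc 1 n).image fun i => fun _ => (i : ℝ)

/-- The classifier `h_c(x) = (c ≤ x₁ ∧ x₂ < c + 1)`, realized by a height-2 decision
tree whose two internal nodes query distinct dimensions. -/
def hC (dim : ℕ) (hdim : 2 ≤ dim) (c : ℕ) : (Fin dim → ℝ) → Bool :=
  fun x => decide ((c : ℝ) ≤ x ⟨0, by omega⟩ ∧ x ⟨1, by omega⟩ < (c : ℝ) + 1)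

/-- The hypothesis class: the all-zero classifier together with `h_c` for
`c ∈ {1, …, n}`. -/
def Hdiag (n dim : ℕ) (hdim : 2 ≤ dim) : Set ((Fin dim → ℝ) → Bool) :=
  insert (fun _ => false) {h | ∃ c ∈ Finset.Icc 1 n, h = hC dim hdim c}

lemma diagX_eq (n dim : ℕ) :
    diagX n dim = (Finset.Icc 1 n).image (fun (i : ℕ) => (fun _ => ((i : ℕ) : ℝ) : Fin dim → ℝ)) := by
  ext x
  simp [diagX]

lemma diag_inj (dim : ℕ) (hdim : 2 ≤ dim) :
    Function.Injective (fun (i : ℕ) => (fun _ => ((i : ℕ) : ℝ) : Fin dim → ℝ)) := by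
  intro i j h
  have := congrFun h ⟨0, by omega⟩
  simpa using this

lemma card_diagX (n dim : ℕ) (hdim : 2 ≤ dim) : (diagX n dim).card = n := by
  rw [diagX_eq, Finset.card_image_of_injective _ (diag_inj dim hdim)]
  simp

lemma hC_diag (dim : ℕ) (hdim : 2 ≤ dim) (c i : ℕ) :
    hC dim hdim c (fun _ => (i : ℝ)) = decide (i = c) := by
  rw [hC, decide_eq_decide,
    show ((c:ℝ)+1) = ((c+1:ℕ):ℝ) by push_cast; ring, Nat.cast_le, Nat.cast_lt]
  omega

lemma filter_hC (n dim : ℕ) (hdim : 2 ≤ dim) (c : ℕ) (hc : c ∈ Finset.Icc 1 n) :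
    ((diagX n dim).filter fun x =>
      (fun _ => false : (Fin dim → ℝ) → Bool) x ≠ hC dim hdim c x)
    = {fun _ => (c : ℝ)} := by
  ext x
  rw [diagX_eq]
  simp only [Finset.mem_filter, Finset.mem_image, Finset.mem_singleton]
  constructor
  · rintro ⟨⟨i, hi, rfl⟩, hne⟩
    rw [hC_diag dim hdim c i] at hne
    simp only [ne_eq, Bool.false_eq, decide_eq_false_iff_not, not_not] at hne
    subst hne; rfl
  · rintro rfl
    refine ⟨⟨c, hc, rfl⟩, ?_⟩
    rw [hC_diag dim hdim c c]
    simp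

lemma dist_hC (n dim : ℕ) (hn : 1 ≤ n) (hdim : 2 ≤ dim) (c : ℕ) (hc : c ∈ Finset.Icc 1 n) :
    hypDist (diagX n dim) (fun _ => false) (hC dim hdim c) = 1 / n := by
  rw [hypDist, card_diagX n dim hdim, filter_hC n dim hdim c hc]
  simp
lemma h0_mem_ball (n dim : ℕ) (hn : 1 ≤ n) (hdim : 2 ≤ dim) (r : ℝ) (hr : 0 ≤ r) :
    (fun _ => false : (Fin dim → ℝ) → Bool) ∈
      hypBall (diagX n dim) (Hdiag n dim hdim) (fun _ => false) r := by
  refine ⟨Set.mem_insert _ _, ?_⟩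
  have : hypDist (diagX n dim) (fun _ => false) (fun _ => false : (Fin dim → ℝ) → Bool) = 0 := by
    simp [hypDist]
  rw [this]; exact hr

lemma part1 (n dim : ℕ) (hn : 1 ≤ n) (hdim : 2 ≤ dim) :
    ∀ c ∈ Finset.Icc 1 n,
      hC dim hdim c ∈
        hypBall (diagX n dim) (Hdiag n dim hdim) (fun _ => false) (1 / (n : ℝ)) := by
  intro c hc
  exact ⟨Set.mem_insert_iff.2 (Or.inr ⟨c, hc, rfl⟩), (dist_hC n dim hn hdim c hc).le⟩

lemma part2 (n dim : ℕ) (hn : 1 ≤ n) (hdim : 2 ≤ dim) :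
    DIS (diagX n dim)
        (hypBall (diagX n dim) (Hdiag n dim hdim) (fun _ => false) (1 / (n : ℝ)))
      = diagX n dim := by
  rw [DIS, Finset.filter_eq_self]
  intro x hx
  rw [diagX_eq] at hx
  obtain ⟨i, hi, rfl⟩ := Finset.mem_image.1 hx
  refine ⟨fun _ => false, h0_mem_ball n dim hn hdim _ (by positivity), hC dim hdim i,
    part1 n dim hn hdim i hi, ?_⟩
  rw [hC_diag dim hdim i i]
  simp

lemma ball_small (n dim : ℕ) (hn : 1 ≤ n) (hdim : 2 ≤ dim) (r : ℝ) (hr : r < 1 / n)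
    (h' : (Fin dim → ℝ) → Bool)
    (hmem : h' ∈ hypBall (diagX n dim) (Hdiag n dim hdim) (fun _ => false) r) :
    h' = fun _ => false := by
  obtain ⟨hH, hd⟩ := hmem
  rcases Set.mem_insert_iff.1 hH with h | ⟨c, hc, rfl⟩
  · exact h
  · exact absurd hd (by rw [dist_hC n dim hn hdim c hc]; linarith)

lemma bound (n dim : ℕ) (hn : 1 ≤ n) (hdim : 2 ≤ dim) (r : ℝ) (hr : 0 < r) :
    ((DIS (diagX n dim)
        (hypBall (diagX n dim) (Hdiag n dim hdim) (fun _ => false) r)).card : ℝ)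
      / (r * (diagX n dim).card) ≤ n := by
  have hn0 : (0:ℝ) < n := by exact_mod_cast hn
  rcases lt_or_ge r (1 / n) with h | h
  · have : DIS (diagX n dim)
        (hypBall (diagX n dim) (Hdiag n dim hdim) (fun _ => false) r) = ∅ := by
      rw [DIS, Finset.filter_false_of_mem]
      intro x _
      rintro ⟨h₁, hm₁, h₂, hm₂, hne⟩
      rw [ball_small n dim hn hdim r h h₁ hm₁, ball_small n dim hn hdim r h h₂ hm₂] at hne
      exact hne rfl
    rw [this]
    simp [hn0.le]
  · have hcard : ((DIS (diagX n dim)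
        (hypBall (diagX n dim) (Hdiag n dim hdim) (fun _ => false) r)).card : ℝ) ≤ n := by
      have := Finset.card_filter_le (diagX n dim)
        (fun x => ∃ h₁ ∈ hypBall (diagX n dim) (Hdiag n dim hdim) (fun _ => false) r,
          ∃ h₂ ∈ hypBall (diagX n dim) (Hdiag n dim hdim) (fun _ => false) r, h₁ x ≠ h₂ x)
      rw [card_diagX n dim hdim] at this
      exact_mod_cast this
    rw [card_diagX n dim hdim]
    rw [div_le_iff₀ (by positivity)]
    calc ((DIS (diagX n dim)
        (hypBall (diagX n dim) (Hdiag n dim hdim) (fun _ => false) r)).card : ℝ) ≤ n := hcard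
      _ ≤ n * (r * n) := by
          have h1 : (1:ℝ) ≤ r * n := by
            rw [div_le_iff₀ hn0] at h; linarith [mul_comm r (n:ℝ)]
          nlinarith

theorem stmt14' (n dim : ℕ) (hn : 1 ≤ n) (hdim : 2 ≤ dim) :
    (n : ℝ) ≤ ⨆ (r : ℝ) (_ : 0 < r),
        ((DIS (diagX n dim)
            (hypBall (diagX n dim) (Hdiag n dim hdim) (fun _ => false) r)).card : ℝ)
          / (r * (diagX n dim).card) := by
  have hn0 : (0:ℝ) < n := by exact_mod_cast hn
  have hbdd : BddAbove (Set.range fun r : ℝ => ⨆ _ : 0 < r,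
      ((DIS (diagX n dim)
          (hypBall (diagX n dim) (Hdiag n dim hdim) (fun _ => false) r)).card : ℝ)
        / (r * (diagX n dim).card)) := by
    refine ⟨n, ?_⟩
    rintro _ ⟨r, rfl⟩
    by_cases h : 0 < r
    · dsimp only
      rw [ciSup_pos h]; exact bound n dim hn hdim r h
    · haveI : IsEmpty (0 < r) := ⟨h⟩
      dsimp only
      rw [Real.iSup_of_isEmpty]
      exact hn0.le
  refine le_ciSup_of_le hbdd (1 / n) ?_
  rw [ciSup_pos (by positivity : (0:ℝ) < 1 / n)]
  rw [part2 n dim hn hdim, card_diagX n dim hdim]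
  rw [one_div, inv_mul_cancel₀ hn0.ne']
  simp
/-- On the diagonal dataset, each `h_c` lies in `B_H(h₀, 1/n)`, the disagreement
region of `B_H(h₀, 1/n)` is all of `X`, and hence the disagreement coefficient of
the all-zero classifier is at least `n`. -/
theorem stmt14 (n dim : ℕ) (hn : 1 ≤ n) (hdim : 2 ≤ dim) :
    (∀ c ∈ Finset.Icc 1 n,
      hC dim hdim c ∈
        hypBall (diagX n dim) (Hdiag n dim hdim) (fun _ => false) (1 / (n : ℝ))) ∧
    DIS (diagX n dim)
        (hypBall (diagX n dim) (Hdiag n dim hdim) (fun _ => false) (1 / (n : ℝ)))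
      = diagX n dim ∧
    (n : ℝ) ≤ ⨆ (r : ℝ) (_ : 0 < r),
        ((DIS (diagX n dim)
            (hypBall (diagX n dim) (Hdiag n dim hdim) (fun _ => false) r)).card : ℝ)
          / (r * (diagX n dim).card) := by
  exact ⟨part1 n dim hn hdim, part2 n dim hn hdim, stmt14' n dim hn hdim⟩

end
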